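/- Condition (*) holds for the sequence (A_i) if and only if condition (*)' holds for it. -/

import Mathlib

open Filter Topology NormedSpace
open scoped LinearAlgebra.Projectivization

set_option linter.unusedSectionVars false

noncomputable section

namespace CSW

variable {E : Type*} [NormedAddCommGroup E] [InnerProductSpace ℂ E] [FiniteDimensional ℂ E]
variable {V : Type*} [NormedAddCommGroup V] [InnerProductSpace ℂ V] [FiniteDimensional ℂ V]

/-- The exponential `e^T` of a bounded operator, as a unit (invertible element) of the algebra
of continuous linear endomorphisms. -/
def expUnit (T : E →L[ℂ] E) : (E →L[ℂ] E)ˣ where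
  val := exp T
  inv := exp (-T)
  val_inv := by
    letI : NormedAlgebra ℚ (E →L[ℂ] E) := NormedAlgebra.restrictScalars ℚ ℂ (E →L[ℂ] E)
    rw [← exp_add_of_commute (Commute.refl T).neg_right, add_neg_cancel, exp_zero]
  inv_val := by
    letI : NormedAlgebra ℚ (E →L[ℂ] E) := NormedAlgebra.restrictScalars ℚ ℂ (E →L[ℂ] E)
    rw [← exp_add_of_commute (Commute.refl T).neg_left, neg_add_cancel, exp_zero]

/-- `Bseq A i` is `B_i = A_i A_{i-1}⁻¹` (with the junk value `B_0 = 1`). -/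
def Bseq (A : ℕ → (E →L[ℂ] E)ˣ) (i : ℕ) : (E →L[ℂ] E)ˣ := A i * (A (i - 1))⁻¹

/-- Condition (*): for any subsequence, after passing to a further subsequence, `B_{α+1}` and
`B_{α+2}` both converge (in operator norm) to `g e^Λ g⁻¹` for some unitary `g`. -/
def CondStar (A : ℕ → (E →L[ℂ] E)ˣ) (Λ : E →L[ℂ] E) : Prop :=
  ∀ φ : ℕ → ℕ, StrictMono φ → ∃ ψ : ℕ → ℕ, StrictMono ψ ∧ ∃ g : (E →L[ℂ] E)ˣ,
    (g : E →L[ℂ] E) ∈ unitary (E →L[ℂ] E) ∧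
    Tendsto (fun j => (Bseq A (φ (ψ j) + 1) : E →L[ℂ] E)) atTop
      (𝓝 ((g * expUnit Λ * g⁻¹ : (E →L[ℂ] E)ˣ) : E →L[ℂ] E)) ∧
    Tendsto (fun j => (Bseq A (φ (ψ j) + 2) : E →L[ℂ] E)) atTop
      (𝓝 ((g * expUnit Λ * g⁻¹ : (E →L[ℂ] E)ˣ) : E →L[ℂ] E))

/-- Condition (*)' for a given gauge sequence `g`: `g 0 = 1`, each `g i` is unitary,
`B_i g_i e^{-Λ} g_i⁻¹ → Id` and `g_{i-1}⁻¹ g_i → Id`. -/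
def CondStar' (A : ℕ → (E →L[ℂ] E)ˣ) (Λ : E →L[ℂ] E) (g : ℕ → (E →L[ℂ] E)ˣ) : Prop :=
  g 0 = 1 ∧ (∀ i, (g i : E →L[ℂ] E) ∈ unitary (E →L[ℂ] E)) ∧
  Tendsto (fun i => ((Bseq A i * g i * expUnit (-Λ) * (g i)⁻¹ : (E →L[ℂ] E)ˣ) : E →L[ℂ] E))
    atTop (𝓝 1) ∧
  Tendsto (fun i => (((g (i - 1))⁻¹ * g i : (E →L[ℂ] E)ˣ) : E →L[ℂ] E)) atTop (𝓝 1)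

/-- Membership in `G_Λ = {g ∈ G : g Λ g⁻¹ = Λ}`. -/
def InGΛ (Λ : E →L[ℂ] E) (h : (E →L[ℂ] E)ˣ) : Prop :=
  (h : E →L[ℂ] E) * Λ = Λ * (h : E →L[ℂ] E)

/-- Membership in `K_Λ = {g ∈ K : g Λ g⁻¹ = Λ}`. -/
def InKΛ (Λ : E →L[ℂ] E) (h : (E →L[ℂ] E)ˣ) : Prop :=
  (h : E →L[ℂ] E) ∈ unitary (E →L[ℂ] E) ∧ InGΛ Λ h

/-- A (continuous, finite-dimensional) complex representation `ρ` of `G = GL(E)` on a Hermitian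
vector space `V`, mapping unitary elements to unitary elements, together with a self-adjoint
operator `Λ_V` on `V` compatible with `Λ` via `ρ(e^{tΛ}) = e^{tΛ_V}`. -/
structure Rep (Λ : E →L[ℂ] E) (V : Type*) [NormedAddCommGroup V] [InnerProductSpace ℂ V]
    [FiniteDimensional ℂ V] where
  ρ : (E →L[ℂ] E)ˣ →* (V →L[ℂ] V)ˣ
  continuous_ρ : Continuous fun u : (E →L[ℂ] E)ˣ => ((ρ u : (V →L[ℂ] V)ˣ) : V →L[ℂ] V)
  unitary_ρ : ∀ u : (E →L[ℂ] E)ˣ, (u : E →L[ℂ] E) ∈ unitary (E →L[ℂ] E) →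
    ((ρ u : (V →L[ℂ] V)ˣ) : V →L[ℂ] V) ∈ unitary (V →L[ℂ] V)
  ΛV : V →L[ℂ] V
  selfAdjoint_ΛV : IsSelfAdjoint ΛV
  exp_eq : ∀ t : ℝ, ((ρ (expUnit ((t : ℂ) • Λ)) : (V →L[ℂ] V)ˣ) : V →L[ℂ] V)
      = exp ((t : ℂ) • ΛV)

variable {Λ : E →L[ℂ] E}

theorem unit_apply_ne_zero (u : (V →L[ℂ] V)ˣ) {v : V} (hv : v ≠ 0) :
    (u : V →L[ℂ] V) v ≠ 0 := by
  intro h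
  apply hv
  have h2 : (((u⁻¹ : (V →L[ℂ] V)ˣ) : V →L[ℂ] V) * (u : V →L[ℂ] V)) v = 0 := by
    rw [ContinuousLinearMap.mul_apply, h, map_zero]
  rwa [Units.inv_mul, ContinuousLinearMap.one_apply] at h2

theorem unit_apply_injective (u : (V →L[ℂ] V)ˣ) :
    Function.Injective ((u : V →L[ℂ] V) : V → V) := by
  intro a b hab
  have h2 := congrArg (fun x => ((u⁻¹ : (V →L[ℂ] V)ˣ) : V →L[ℂ] V) x) hab
  simpa [← ContinuousLinearMap.mul_apply, Units.inv_mul] using h2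

/-- `f_i(v) = log ‖ρ(A_i) v‖`. -/
def fseq (R : Rep Λ V) (A : ℕ → (E →L[ℂ] E)ˣ) (v : V) (i : ℕ) : ℝ :=
  Real.log ‖(R.ρ (A i) : V →L[ℂ] V) v‖

/-- The quotient topology on the projectivization of a topological vector space. -/
instance : TopologicalSpace (ℙ ℂ V) := instTopologicalSpaceQuotient

/-- The natural action of `GL(E)` on `ℙ(V)` through the representation `R`. -/
def pact (R : Rep Λ V) (u : (E →L[ℂ] E)ˣ) : ℙ ℂ V → ℙ ℂ V :=
  Projectivization.map (((R.ρ u : (V →L[ℂ] V)ˣ) : V →L[ℂ] V) : V →ₗ[ℂ] V)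
    (unit_apply_injective _)

/-- The limit set `Lim(v) ⊆ ℙ(V)`: the union of the `ρ(K_Λ)`-orbits of all subsequential limits
of `[ρ(g_i⁻¹ A_i) v]`. -/
def LimSet (R : Rep Λ V) (A g : ℕ → (E →L[ℂ] E)ˣ) {v : V} (hv : v ≠ 0) :
    Set (ℙ ℂ V) :=
  {y | ∃ (w : V) (hw : w ≠ 0) (k : (E →L[ℂ] E)ˣ), InKΛ Λ k ∧
    y = Projectivization.mk ℂ ((R.ρ k : V →L[ℂ] V) w) (unit_apply_ne_zero _ hw) ∧
    ∃ φ : ℕ → ℕ, StrictMono φ ∧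
      Tendsto (fun j => Projectivization.mk ℂ
          ((R.ρ ((g (φ j))⁻¹ * A (φ j)) : V →L[ℂ] V) v) (unit_apply_ne_zero _ hv))
        atTop (𝓝 (Projectivization.mk ℂ w hw))}

/-- The eigenspace `U` of `Λ` with (real) eigenvalue `c`. -/
def eigU (Λ : E →L[ℂ] E) (c : ℝ) : Submodule ℂ E :=
  Module.End.eigenspace (Λ : E →ₗ[ℂ] E) (c : ℂ)

/-- The weight `d(v) = lim_i i⁻¹ log ‖A_i v‖` for the standard representation of `GL(E)` on `E`
(a junk value if the limit does not exist). -/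
def dstd (A : ℕ → (E →L[ℂ] E)ˣ) (v : E) : ℝ :=
  limUnder atTop fun i : ℕ => Real.log ‖(A i : E →L[ℂ] E) v‖ / i

/-- `p_s = Σ_{k ≤ s} n_k` where `n_k = dim U_k`. -/
def psum (Λ : E →L[ℂ] E) {r : ℕ} (lam : Fin r → ℝ) (s : Fin r) : ℕ :=
  ∑ k ∈ Finset.univ.filter (fun k => k ≤ s), Module.finrank ℂ (eigU Λ (lam k))

/-- `q_s = Σ_{k ≥ s} n_k` where `n_k = dim U_k`. -/
def qsum (Λ : E →L[ℂ] E) {r : ℕ} (lam : Fin r → ℝ) (s : Fin r) : ℕ :=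
  ∑ k ∈ Finset.univ.filter (fun k => s ≤ k), Module.finrank ℂ (eigU Λ (lam k))

/-- A model for the `p`-th exterior power of `E`, with its induced Hermitian metric
(determined by `⟨x₁∧⋯∧x_p, y₁∧⋯∧y_p⟩ = det(⟨x_i, y_j⟩)`), the induced representation of `GL(E)`,
and the induced self-adjoint operator (the derivation extension of `Λ`, pinned down by
`Rep.exp_eq` and equivariance of `wedge`). -/
structure ExtPower (Λ : E →L[ℂ] E) (p : ℕ) where
  P : Type
  [normed : NormedAddCommGroup P]
  [ips : InnerProductSpace ℂ P]
  [fd : FiniteDimensional ℂ P]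
  R : Rep Λ P
  wedge : E [⋀^Fin p]→ₗ[ℂ] P
  wedge_map : ∀ (u : (E →L[ℂ] E)ˣ) (x : Fin p → E),
    ((R.ρ u : (P →L[ℂ] P)ˣ) : P →L[ℂ] P) (wedge x) = wedge fun j => (u : E →L[ℂ] E) (x j)
  wedge_inner : ∀ x y : Fin p → E,
    (inner ℂ (wedge x) (wedge y) : ℂ) = (Matrix.of fun i j : Fin p => (inner ℂ (x i) (y j) : ℂ)).det
  wedge_span : Submodule.span ℂ (Set.range wedge) = ⊤

attribute [instance] ExtPower.normed ExtPower.ips ExtPower.fd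

/-- A bundle of the choices made in Section 2 of the paper: a gauge sequence `g` as in (*)',
the filtration `V_s` (with `V_{r+1} = 0`), complements `W_s` with `V_s = W_s ⊕ V_{s+1}` and
`Lim(W_s) = {[⋀^{n_s} U_s]}`, and identifications `C_i → Id` carrying `g_i⁻¹ A_i · W_s`
onto `U_s`. -/
structure Choices (A : ℕ → (E →L[ℂ] E)ˣ) (Λ : E →L[ℂ] E) (r : ℕ) (lam : Fin r → ℝ)
    (EP : ∀ p : ℕ, ExtPower Λ p) where
  g : ℕ → (E →L[ℂ] E)ˣ
  hg : CondStar' A Λ g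
  Vsub : Fin (r + 1) → Submodule ℂ E
  hVsub : ∀ s : Fin r, (Vsub s.castSucc : Set E) = {v : E | v = 0 ∨ dstd A v ≤ lam s}
  hVlast : Vsub (Fin.last r) = ⊥
  W : Fin r → Submodule ℂ E
  hW_sup : ∀ s : Fin r, W s ⊔ Vsub s.succ = Vsub s.castSucc
  hW_inf : ∀ s : Fin r, W s ⊓ Vsub s.succ = ⊥
  hW_lim : ∀ s : Fin r, ∀ b : Fin (Module.finrank ℂ (eigU Λ (lam s))) → E,
    LinearIndependent ℂ b → Submodule.span ℂ (Set.range b) = W s →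
    ∀ c : Fin (Module.finrank ℂ (eigU Λ (lam s))) → E,
    LinearIndependent ℂ c → Submodule.span ℂ (Set.range c) = eigU Λ (lam s) →
    ∃ (hb : (EP (Module.finrank ℂ (eigU Λ (lam s)))).wedge b ≠ 0)
      (hc : (EP (Module.finrank ℂ (eigU Λ (lam s)))).wedge c ≠ 0),
      LimSet (EP (Module.finrank ℂ (eigU Λ (lam s)))).R A g hb
        = {Projectivization.mk ℂ ((EP (Module.finrank ℂ (eigU Λ (lam s)))).wedge c) hc}
  C : ℕ → (E →L[ℂ] E)ˣ
  hC_lim : Tendsto (fun i => (C i : E →L[ℂ] E)) atTop (𝓝 1)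
  hC_map : ∀ (s : Fin r) (i : ℕ),
    Submodule.map ((((C i * (g i)⁻¹ * A i : (E →L[ℂ] E)ˣ) : E →L[ℂ] E) : E →ₗ[ℂ] E)) (W s)
      = eigU Λ (lam s)

/-- A model for the symmetric algebra `Sym(E*) = ⊕_k Sym^k(E*)` on the dual of `E`:
each graded piece is a Hermitian space carrying a compatible representation of `GL(E)`
(induced by the dual of the standard representation), `gen` identifies the degree-one piece
with `E*` equivariantly, and the product is bilinear, equivariant, has no zero divisors, and
together with the generators spans each graded piece. -/
structure SymModel (Λ : E →L[ℂ] E) where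
  P : ℕ → Type
  [normed : ∀ k, NormedAddCommGroup (P k)]
  [ips : ∀ k, InnerProductSpace ℂ (P k)]
  [fd : ∀ k, FiniteDimensional ℂ (P k)]
  R : ∀ k, Rep Λ (P k)
  mul : ∀ {k l : ℕ}, P k →ₗ[ℂ] P l →ₗ[ℂ] P (k + l)
  mul_equivariant : ∀ {k l : ℕ} (u : (E →L[ℂ] E)ˣ) (x : P k) (y : P l),
    (((R (k + l)).ρ u : (P (k + l) →L[ℂ] P (k + l))ˣ) : P (k + l) →L[ℂ] P (k + l)) (mul x y)
      = mul ((((R k).ρ u : (P k →L[ℂ] P k)ˣ) : P k →L[ℂ] P k) x)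
            ((((R l).ρ u : (P l →L[ℂ] P l)ˣ) : P l →L[ℂ] P l) y)
  mul_ne_zero : ∀ {k l : ℕ} {x : P k} {y : P l}, x ≠ 0 → y ≠ 0 → mul x y ≠ 0
  gen : (E →L[ℂ] ℂ) ≃ₗ[ℂ] P 1
  gen_equivariant : ∀ (u : (E →L[ℂ] E)ˣ) (l : E →L[ℂ] ℂ),
    (((R 1).ρ u : (P 1 →L[ℂ] P 1)ˣ) : P 1 →L[ℂ] P 1) (gen l)
      = gen (l.comp (((u⁻¹ : (E →L[ℂ] E)ˣ) : E →L[ℂ] E)))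
  span_gen_mul : ∀ k : ℕ, Submodule.span ℂ
      {z : P (k + 1) | ∃ (x : P k) (l : E →L[ℂ] ℂ), z = mul x (gen l)} = ⊤

attribute [instance] SymModel.normed SymModel.ips SymModel.fd


section AuxCSW

theorem aux_isCompact_unitary : IsCompact (unitary (E →L[ℂ] E) : Set (E →L[ℂ] E)) := by
  apply Metric.isCompact_of_isClosed_isBounded
  · have h : (unitary (E →L[ℂ] E) : Set (E →L[ℂ] E))
        = {u : E →L[ℂ] E | star u * u = 1} ∩ {u : E →L[ℂ] E | u * star u = 1} := by
      ext u; simpa [Set.mem_inter_iff] using Unitary.mem_iff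
    rw [h]
    exact (isClosed_eq (by fun_prop) continuous_const).inter
      (isClosed_eq (by fun_prop) continuous_const)
  · refine isBounded_iff_forall_norm_le.mpr ⟨1, fun u hu => ?_⟩
    have h1 : ‖star u * u‖ = ‖u‖ * ‖u‖ := CStarRing.norm_star_mul_self
    have h2 : star u * u = 1 := (Unitary.mem_iff.mp hu).1
    have h3 : ‖(1 : E →L[ℂ] E)‖ ≤ 1 := by
      rw [ContinuousLinearMap.one_def]
      exact ContinuousLinearMap.norm_id_le
    rw [h2] at h1
    nlinarith [norm_nonneg u]

theorem aux_coe_inv_unitary (u : (E →L[ℂ] E)ˣ) (hu : (u : E →L[ℂ] E) ∈ unitary (E →L[ℂ] E)) :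
    ((u⁻¹ : (E →L[ℂ] E)ˣ) : E →L[ℂ] E) = star (u : E →L[ℂ] E) :=
  Units.inv_eq_of_mul_eq_one_left (Unitary.mem_iff.mp hu).1

theorem aux_tendsto_zero_of_forall {f : ℕ → ℝ} (h0 : ∀ i, 0 ≤ f i)
    (h : ∀ ε > (0:ℝ), ∀ᶠ i in atTop, f i < ε) : Tendsto f atTop (𝓝 0) :=
  tendsto_order.2 ⟨fun b hb => Eventually.of_forall fun i => lt_of_lt_of_le hb (h0 i),
    fun b hb => h b hb⟩

end AuxCSW

set_option maxHeartbeats 1000000 in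
/-- Condition (*) holds for the sequence `(A_i)` if and only if
condition (*)' holds for it (i.e. some gauge sequence `g` as in (*)' exists). -/
theorem condStar_iff_condStar' (Λ : E →L[ℂ] E) (hΛ : IsSelfAdjoint Λ)
    (A : ℕ → (E →L[ℂ] E)ˣ) (hA0 : A 0 = 1) :
    CondStar A Λ ↔ ∃ g : ℕ → (E →L[ℂ] E)ˣ, CondStar' A Λ g := by
  constructor
  · intro hcs
    set eΛ : E →L[ℂ] E := exp Λ with heΛdef
    set F : (E →L[ℂ] E) → (E →L[ℂ] E) := fun x => x * eΛ * star x with hFdef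
    have hFcont : Continuous F := by
      rw [hFdef]; exact (continuous_id.mul continuous_const).mul continuous_star
    have hstar_eΛ : star eΛ = eΛ := by rw [heΛdef, star_exp, hΛ.star_eq]
    have heΛ_inv : eΛ * exp (-Λ) = 1 := by rw [heΛdef]; exact (expUnit Λ).val_inv
    have hFconj : ∀ c : E →L[ℂ] E, c ∈ unitary (E →L[ℂ] E) → c * eΛ = eΛ * c →
        ∀ x : E →L[ℂ] E, F (x * c) = F x := by
      intro c hc hcomm x
      have h2 : c * star c = 1 := (Unitary.mem_iff.mp hc).2
      have h3 : c * eΛ * star c = eΛ := by rw [hcomm, mul_assoc, h2, mul_one]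
      simp only [hFdef]
      rw [star_mul]
      calc x * c * eΛ * (star c * star x) = x * (c * eΛ * star c) * star x := by
            simp only [mul_assoc]
        _ = x * eΛ * star x := by rw [h3]
    have hLcoe : ∀ gu : (E →L[ℂ] E)ˣ, (gu : E →L[ℂ] E) ∈ unitary (E →L[ℂ] E) →
        ((gu * expUnit Λ * gu⁻¹ : (E →L[ℂ] E)ˣ) : E →L[ℂ] E) = F (gu : E →L[ℂ] E) := by
      intro gu hgu
      rw [Units.val_mul, Units.val_mul, aux_coe_inv_unitary gu hgu]
      simp only [hFdef, heΛdef]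
      rfl
    set D : ℕ → (E →L[ℂ] E) → ℝ := fun i x =>
      ‖(Bseq A (i+1) : E →L[ℂ] E) - F x‖ + ‖(Bseq A (i+2) : E →L[ℂ] E) - F x‖ with hDdef
    have hDcont : ∀ i, Continuous (D i) := fun i =>
      ((continuous_const.sub hFcont).norm.add (continuous_const.sub hFcont).norm)
    have hUcomp := aux_isCompact_unitary (E := E)
    have hUne : (unitary (E →L[ℂ] E) : Set (E →L[ℂ] E)).Nonempty := ⟨1, one_mem _⟩
    have hmin : ∀ i, ∃ x ∈ unitary (E →L[ℂ] E), ∀ y ∈ unitary (E →L[ℂ] E), D i x ≤ D i y := by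
      intro i
      obtain ⟨x, hx, hmx⟩ := hUcomp.exists_isMinOn hUne (hDcont i).continuousOn
      exact ⟨x, hx, fun y hy => hmx hy⟩
    choose k hkU hkmin using hmin
    have hDnonneg : ∀ i x, 0 ≤ D i x := fun i x =>
      add_nonneg (norm_nonneg _) (norm_nonneg _)
    have hD0 : Tendsto (fun i => D i (k i)) atTop (𝓝 0) := by
      apply aux_tendsto_zero_of_forall (fun i => hDnonneg i (k i))
      intro ε hε
      by_contra hcon
      rw [Filter.not_eventually] at hcon
      obtain ⟨φ, hφ, hφ'⟩ := Filter.extraction_of_frequently_atTop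
        (hcon.mono fun i hi => not_lt.mp hi)
      obtain ⟨ψ, hψ, gu, hgu, h1, h2⟩ := hcs φ hφ
      rw [hLcoe gu hgu] at h1 h2
      have hDg : Tendsto (fun j => D (φ (ψ j)) (gu : E →L[ℂ] E)) atTop (𝓝 0) := by
        have t1 := (h1.sub_const (F (gu : E →L[ℂ] E))).norm
        have t2 := (h2.sub_const (F (gu : E →L[ℂ] E))).norm
        have t3 := t1.add t2
        simp only [sub_self, norm_zero, add_zero] at t3
        simpa only [hDdef] using t3
      obtain ⟨j, hj⟩ := (hDg.eventually (gt_mem_nhds hε)).exists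
      exact absurd (le_trans (hφ' (ψ j)) (hkmin _ _ hgu)) (not_le.mpr hj)
    set CΛ : Set (E →L[ℂ] E) :=
      {c | c ∈ unitary (E →L[ℂ] E) ∧ c * eΛ = eΛ * c} with hCdef
    have hCcomp : IsCompact CΛ := by
      have h : CΛ = (unitary (E →L[ℂ] E) : Set (E →L[ℂ] E)) ∩ {c | c * eΛ = eΛ * c} := rfl
      rw [h]
      exact hUcomp.inter_right
        (isClosed_eq (continuous_id.mul continuous_const) (continuous_const.mul continuous_id))
    have hCne : CΛ.Nonempty := ⟨1, one_mem _, by rw [one_mul, mul_one]⟩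
    have hmin2 : ∀ m, ∃ x ∈ CΛ, ∀ y ∈ CΛ, ‖k (m+1) - k m * x‖ ≤ ‖k (m+1) - k m * y‖ := by
      intro m
      obtain ⟨x, hx, hmx⟩ := hCcomp.exists_isMinOn hCne
        (f := fun y => ‖k (m+1) - k m * y‖)
        ((continuous_const.sub (continuous_const.mul continuous_id)).norm.continuousOn)
      exact ⟨x, hx, fun y hy => hmx hy⟩
    choose d hdC hdmin using hmin2
    have hFk : Tendsto (fun m => ‖F (k (m+1)) - F (k m)‖) atTop (𝓝 0) := by
      apply squeeze_zero (fun m => norm_nonneg _)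
        (g := fun m => D (m+1) (k (m+1)) + D m (k m))
      · intro m
        have hrw : F (k (m+1)) - F (k m)
            = ((Bseq A (m+2) : E →L[ℂ] E) - F (k m))
              - ((Bseq A (m+2) : E →L[ℂ] E) - F (k (m+1))) := by abel
        rw [hrw]
        refine le_trans (norm_sub_le _ _) ?_
        have e1 : ‖(Bseq A (m+2) : E →L[ℂ] E) - F (k m)‖ ≤ D m (k m) := by
          simp only [hDdef]; exact le_add_of_nonneg_left (norm_nonneg _)
        have e2 : ‖(Bseq A (m+2) : E →L[ℂ] E) - F (k (m+1))‖ ≤ D (m+1) (k (m+1)) := by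
          simp only [hDdef]; exact le_add_of_nonneg_right (norm_nonneg _)
        linarith
      · have hsh : Tendsto (fun m => D (m+1) (k (m+1))) atTop (𝓝 0) :=
          hD0.comp (tendsto_add_atTop_nat 1)
        simpa using hsh.add hD0
    have hd0 : Tendsto (fun m => ‖k (m+1) - k m * d m‖) atTop (𝓝 0) := by
      apply aux_tendsto_zero_of_forall (fun m => norm_nonneg _)
      intro ε hε
      by_contra hcon
      rw [Filter.not_eventually] at hcon
      obtain ⟨φ, hφ, hφ'⟩ := Filter.extraction_of_frequently_atTop
        (hcon.mono fun i hi => not_lt.mp hi)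
      obtain ⟨b, hbU, ψ1, hψ1, hb⟩ := hUcomp.tendsto_subseq
        (x := fun j => k (φ j)) (fun j => hkU _)
      obtain ⟨a, haU, ψ2, hψ2, ha⟩ := hUcomp.tendsto_subseq
        (x := fun j => k (φ (ψ1 j) + 1)) (fun j => hkU _)
      set σ : ℕ → ℕ := fun j => φ (ψ1 (ψ2 j)) with hσdef
      have hσmono : StrictMono σ := (hφ.comp hψ1).comp hψ2
      have hka : Tendsto (fun j => k (σ j + 1)) atTop (𝓝 a) := ha
      have hkb : Tendsto (fun j => k (σ j)) atTop (𝓝 b) := hb.comp hψ2.tendsto_atTop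
      have hFab : F a = F b := by
        have l1 : Tendsto (fun j => ‖F (k (σ j + 1)) - F (k (σ j))‖) atTop
            (𝓝 ‖F a - F b‖) :=
          (((hFcont.tendsto a).comp hka).sub ((hFcont.tendsto b).comp hkb)).norm
        have l2 : Tendsto (fun j => ‖F (k (σ j + 1)) - F (k (σ j))‖) atTop (𝓝 0) :=
          hFk.comp hσmono.tendsto_atTop
        have := tendsto_nhds_unique l1 l2
        exact sub_eq_zero.mp (norm_eq_zero.mp this)
      have ha1 : star a * a = 1 := (Unitary.mem_iff.mp haU).1
      have hb1 : star b * b = 1 := (Unitary.mem_iff.mp hbU).1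
      have hb2 : b * star b = 1 := (Unitary.mem_iff.mp hbU).2
      have hc0U : star b * a ∈ unitary (E →L[ℂ] E) := mul_mem (Unitary.star_mem hbU) haU
      have hc0comm : (star b * a) * eΛ = eΛ * (star b * a) := by
        have e1 : star b * (a * eΛ * star a) * a = star b * a * eΛ := by
          simp only [mul_assoc, ha1, mul_one]
        have e2 : star b * (b * eΛ * star b) * a = eΛ * (star b * a) := by
          simp only [← mul_assoc]
          rw [hb1, one_mul]
        have e3 := congrArg (fun x => star b * x * a) hFab
        simp only [hFdef] at e3
        rw [e1, e2] at e3
        exact e3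
      have hbc0 : b * (star b * a) = a := by rw [← mul_assoc, hb2, one_mul]
      have hlim : Tendsto (fun j => ‖k (σ j + 1) - k (σ j) * (star b * a)‖) atTop (𝓝 0) := by
        have hmul : Tendsto (fun j => k (σ j) * (star b * a)) atTop (𝓝 (b * (star b * a))) :=
          hkb.mul tendsto_const_nhds
        have := (hka.sub hmul).norm
        rw [hbc0] at this
        rwa [sub_self, norm_zero] at this
      obtain ⟨j, hj⟩ := (hlim.eventually (gt_mem_nhds hε)).exists
      exact absurd (le_trans (hφ' (ψ1 (ψ2 j))) (hdmin _ _ ⟨hc0U, hc0comm⟩)) (not_le.mpr hj)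
    obtain ⟨c, hc0', hcsucc⟩ : ∃ c : ℕ → E →L[ℂ] E, c 0 = 1 ∧
        ∀ m, c (m+1) = star (d m) * c m :=
      ⟨fun n => Nat.rec 1 (fun m cm => star (d m) * cm) n, rfl, fun m => rfl⟩
    have hcC : ∀ n, c n ∈ CΛ := by
      intro n
      induction n with
      | zero =>
        refine ⟨?_, ?_⟩
        · rw [hc0']; exact one_mem _
        · rw [hc0', one_mul, mul_one]
      | succ m ih =>
        obtain ⟨ihU, ihcomm⟩ := ih
        obtain ⟨hdU, hdcomm⟩ := hdC m
        refine ⟨?_, ?_⟩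
        · rw [hcsucc]; exact mul_mem (Unitary.star_mem hdU) ihU
        · have hstard : star (d m) * eΛ = eΛ * star (d m) := by
            have h5 := congrArg star hdcomm
            rw [star_mul, star_mul, hstar_eΛ] at h5
            exact h5.symm
          rw [hcsucc, mul_assoc, ihcomm, ← mul_assoc, hstard, mul_assoc]
    obtain ⟨gU, hgU0, hgUsucc⟩ : ∃ gU : ℕ → E →L[ℂ] E, gU 0 = 1 ∧
        ∀ m, gU (m+1) = k m * c m :=
      ⟨fun n => Nat.rec 1 (fun m _ => k m * c m) n, rfl, fun m => rfl⟩
    have hgUmem : ∀ n, gU n ∈ unitary (E →L[ℂ] E) := by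
      intro n
      cases n with
      | zero => rw [hgU0]; exact one_mem _
      | succ m => rw [hgUsucc]; exact mul_mem (hkU m) (hcC m).1
    refine ⟨fun n => Unitary.toUnits ⟨gU n, hgUmem n⟩, ?_, ?_, ?_, ?_⟩
    · exact Units.ext (by rw [Units.val_one]; exact hgU0)
    · exact fun i => hgUmem i
    · -- main tendsto : B_i g_i e^{-Λ} g_i⁻¹ → 1
      rw [tendsto_iff_norm_sub_tendsto_zero]
      have hBF : Tendsto (fun i => ‖(Bseq A i : E →L[ℂ] E) - F (gU i)‖) atTop (𝓝 0) := by
        rw [← tendsto_add_atTop_iff_nat 1]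
        refine squeeze_zero (fun m => norm_nonneg _) (g := fun m => D m (k m)) ?_ hD0
        intro m
        have hFg : F (gU (m+1)) = F (k m) := by
          rw [hgUsucc]; exact hFconj (c m) (hcC m).1 (hcC m).2 (k m)
        rw [hFg]
        simp only [hDdef]
        exact le_add_of_nonneg_right (norm_nonneg _)
      refine squeeze_zero (fun i => norm_nonneg _)
        (g := fun i => ‖(Bseq A i : E →L[ℂ] E) - F (gU i)‖ * ‖exp (-Λ)‖) ?_
        (by have h := hBF.mul_const ‖exp (-Λ)‖; rwa [zero_mul] at h)
      intro i
      have hgcoe : ((Unitary.toUnits ⟨gU i, hgUmem i⟩ : (E →L[ℂ] E)ˣ) : E →L[ℂ] E) = gU i := rfl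
      have hginv : (((Unitary.toUnits ⟨gU i, hgUmem i⟩ : (E →L[ℂ] E)ˣ))⁻¹ : (E →L[ℂ] E)ˣ)
          = (star (gU i) : E →L[ℂ] E) := aux_coe_inv_unitary _ (hgUmem i)
      have hstargU : star (gU i) * gU i = 1 := (Unitary.mem_iff.mp (hgUmem i)).1
      have hgUstar : gU i * star (gU i) = 1 := (Unitary.mem_iff.mp (hgUmem i)).2
      have hFone : F (gU i) * (gU i * exp (-Λ) * star (gU i)) = 1 := by
        simp only [hFdef, mul_assoc]
        rw [← mul_assoc (star (gU i)) (gU i), hstargU, one_mul, ← mul_assoc eΛ, heΛ_inv,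
          one_mul, hgUstar]
      have hid : ((Bseq A i * Unitary.toUnits ⟨gU i, hgUmem i⟩ * expUnit (-Λ)
            * (Unitary.toUnits ⟨gU i, hgUmem i⟩)⁻¹ : (E →L[ℂ] E)ˣ) : E →L[ℂ] E) - 1
          = ((Bseq A i : E →L[ℂ] E) - F (gU i)) * (gU i * exp (-Λ) * star (gU i)) := by
        have hcoe : ((Bseq A i * Unitary.toUnits ⟨gU i, hgUmem i⟩ * expUnit (-Λ)
              * (Unitary.toUnits ⟨gU i, hgUmem i⟩)⁻¹ : (E →L[ℂ] E)ˣ) : E →L[ℂ] E)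
            = (Bseq A i : E →L[ℂ] E) * (gU i * exp (-Λ) * star (gU i)) := by
          rw [Units.val_mul, Units.val_mul, Units.val_mul, hginv]
          simp only [mul_assoc]
          rfl
        rw [hcoe, sub_mul, hFone]
      rw [hid]
      calc ‖((Bseq A i : E →L[ℂ] E) - F (gU i)) * (gU i * exp (-Λ) * star (gU i))‖
          ≤ ‖(Bseq A i : E →L[ℂ] E) - F (gU i)‖ * ‖gU i * exp (-Λ) * star (gU i)‖ :=
            norm_mul_le _ _
        _ = ‖(Bseq A i : E →L[ℂ] E) - F (gU i)‖ * ‖exp (-Λ)‖ := by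
            rw [CStarRing.norm_mul_mem_unitary _ (Unitary.star_mem (hgUmem i)),
              CStarRing.norm_mem_unitary_mul _ (hgUmem i)]
    · -- consecutive gauges
      rw [tendsto_iff_norm_sub_tendsto_zero, ← tendsto_add_atTop_iff_nat 2]
      refine squeeze_zero (fun m => norm_nonneg _)
        (g := fun m => ‖k (m+1) - k m * d m‖) ?_ hd0
      intro m
      simp only [show m + 2 - 1 = m + 1 from rfl]
      have hstargU : star (gU (m+1)) * gU (m+1) = 1 := (Unitary.mem_iff.mp (hgUmem (m+1))).1
      have hd2 : d m * star (d m) = 1 := (Unitary.mem_iff.mp (hdC m).1).2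
      have hdc : d m * c (m+1) = c m := by rw [hcsucc, ← mul_assoc, hd2, one_mul]
      have hdiff : gU (m+2) - gU (m+1) = (k (m+1) - k m * d m) * c (m+1) := by
        rw [hgUsucc (m+1), hgUsucc m, ← hdc, sub_mul, mul_assoc]
      have hgcoe2 : ((Unitary.toUnits ⟨gU (m+2), hgUmem (m+2)⟩ : (E →L[ℂ] E)ˣ) : E →L[ℂ] E)
          = gU (m+2) := rfl
      have hginv1 : (((Unitary.toUnits ⟨gU (m+1), hgUmem (m+1)⟩ : (E →L[ℂ] E)ˣ))⁻¹
            : (E →L[ℂ] E)ˣ) = (star (gU (m+1)) : E →L[ℂ] E) :=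
        aux_coe_inv_unitary _ (hgUmem (m+1))
      have hid2 : (((Unitary.toUnits ⟨gU (m+1), hgUmem (m+1)⟩)⁻¹
            * Unitary.toUnits ⟨gU (m+2), hgUmem (m+2)⟩ : (E →L[ℂ] E)ˣ) : E →L[ℂ] E) - 1
          = star (gU (m+1)) * ((k (m+1) - k m * d m) * c (m+1)) := by
        rw [Units.val_mul, hginv1, hgcoe2, ← hdiff, mul_sub, hstargU]
      rw [hid2, CStarRing.norm_mem_unitary_mul _ (Unitary.star_mem (hgUmem (m+1))),
        CStarRing.norm_mul_mem_unitary _ (hcC (m+1)).1]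
  · -- (*)' implies (*)
    rintro ⟨g, hg0, hgUmem, hB, hcons⟩
    intro φ hφ
    obtain ⟨u, huU, ψ, hψ, hu⟩ := (aux_isCompact_unitary (E := E)).tendsto_subseq
      (x := fun j => (g (φ j) : E →L[ℂ] E)) (fun j => hgUmem _)
    have hEinv : expUnit (-Λ) = (expUnit Λ)⁻¹ := Units.ext rfl
    have key : ∀ n : ℕ, (Bseq A n : E →L[ℂ] E)
        = ((Bseq A n * g n * expUnit (-Λ) * (g n)⁻¹ : (E →L[ℂ] E)ˣ) : E →L[ℂ] E)
          * ((g n : E →L[ℂ] E) * exp Λ * star (g n : E →L[ℂ] E)) := by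
      intro n
      have h1 : (g n : E →L[ℂ] E) * exp Λ * star (g n : E →L[ℂ] E)
          = ((g n * expUnit Λ * (g n)⁻¹ : (E →L[ℂ] E)ˣ) : E →L[ℂ] E) := by
        rw [Units.val_mul, Units.val_mul, aux_coe_inv_unitary _ (hgUmem n)]
        rfl
      have h2 : Bseq A n
          = (Bseq A n * g n * expUnit (-Λ) * (g n)⁻¹) * (g n * expUnit Λ * (g n)⁻¹) := by
        rw [hEinv]
        simp only [mul_assoc, inv_mul_cancel_left, mul_inv_cancel, mul_one]
      rw [h1, ← Units.val_mul, ← h2]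
    have main : ∀ n : ℕ → ℕ, Tendsto n atTop atTop →
        Tendsto (fun j => (g (n j) : E →L[ℂ] E)) atTop (𝓝 u) →
        Tendsto (fun j => (Bseq A (n j) : E →L[ℂ] E)) atTop (𝓝 (u * exp Λ * star u)) := by
      intro n hn hgn
      have hBn := hB.comp hn
      have hconj : Tendsto (fun j => (g (n j) : E →L[ℂ] E) * exp Λ
          * star (g (n j) : E →L[ℂ] E)) atTop (𝓝 (u * exp Λ * star u)) :=
        (hgn.mul tendsto_const_nhds).mul hgn.star
      have h4 := hBn.mul hconj
      rw [one_mul] at h4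
      exact h4.congr fun j => (key (n j)).symm
    have hn1 : Tendsto (fun j => φ (ψ j) + 1) atTop atTop :=
      ((hφ.comp hψ).add_const 1).tendsto_atTop
    have hn2 : Tendsto (fun j => φ (ψ j) + 2) atTop atTop :=
      ((hφ.comp hψ).add_const 2).tendsto_atTop
    have hu' : Tendsto (fun j => (g (φ (ψ j)) : E →L[ℂ] E)) atTop (𝓝 u) := hu
    have hg1 : Tendsto (fun j => (g (φ (ψ j) + 1) : E →L[ℂ] E)) atTop (𝓝 u) := by
      have h2 : Tendsto (fun j => (((g (φ (ψ j) + 1 - 1))⁻¹ * g (φ (ψ j) + 1)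
          : (E →L[ℂ] E)ˣ) : E →L[ℂ] E)) atTop (𝓝 1) := hcons.comp hn1
      simp only [Nat.add_sub_cancel] at h2
      have h3 := hu'.mul h2
      rw [mul_one] at h3
      refine h3.congr fun j => ?_
      rw [← Units.val_mul, mul_inv_cancel_left]
    have hg2 : Tendsto (fun j => (g (φ (ψ j) + 2) : E →L[ℂ] E)) atTop (𝓝 u) := by
      have h2 : Tendsto (fun j => (((g (φ (ψ j) + 1))⁻¹ * g (φ (ψ j) + 2)
          : (E →L[ℂ] E)ˣ) : E →L[ℂ] E)) atTop (𝓝 1) := hcons.comp hn2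
      have h3 := hg1.mul h2
      rw [mul_one] at h3
      refine h3.congr fun j => ?_
      rw [← Units.val_mul, mul_inv_cancel_left]
    have hmm := Unitary.mem_iff.mp huU
    have hL : (((⟨u, star u, hmm.2, hmm.1⟩ : (E →L[ℂ] E)ˣ) * expUnit Λ
          * (⟨u, star u, hmm.2, hmm.1⟩ : (E →L[ℂ] E)ˣ)⁻¹ : (E →L[ℂ] E)ˣ) : E →L[ℂ] E)
        = u * exp Λ * star u := by
      rw [Units.val_mul, Units.val_mul, Units.inv_mk]
      rfl
    refine ⟨ψ, hψ, ⟨u, star u, hmm.2, hmm.1⟩, huU, ?_, ?_⟩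
    · rw [hL]
      exact main _ hn1 hg1
    · rw [hL]
      exact main _ hn2 hg2

end CSW
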